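/- Every K4-free simple graph on n vertices has at most n²/3 edges (Turán's theorem for K4). -/

import Mathlib

open SimpleGraph Finset

lemma turan3_bound (n : ℕ) :
    (((SimpleGraph.turanGraph n 3).edgeFinset.card : ℝ)) ≤ (n : ℝ) ^ 2 / 3 := by
  classical
  set T := SimpleGraph.turanGraph n 3 with hT
  have hdeg : ∑ v : Fin n, T.degree v = 2 * T.edgeFinset.card :=
    SimpleGraph.sum_degrees_eq_twice_card_edges _
  set a : ℕ → ℕ := fun i => (Finset.univ.filter (fun v : Fin n => (v : ℕ) % 3 = i)).card with ha
  have haN : ∀ i, a i ≤ n := fun i => by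
    simpa using (Finset.card_filter_le Finset.univ (fun v : Fin n => (v : ℕ) % 3 = i))
  have hdegv : ∀ v : Fin n, T.degree v = n - a ((v : ℕ) % 3) := by
    intro v
    have : T.neighborFinset v =
        Finset.univ.filter (fun w : Fin n => ¬ ((w : ℕ) % 3 = (v : ℕ) % 3)) := by
      ext w
      simp [SimpleGraph.mem_neighborFinset, hT, SimpleGraph.turanGraph, ne_comm]
    rw [SimpleGraph.degree, this, Finset.filter_not, Finset.card_sdiff_of_subset (Finset.filter_subset _ _)]
    simp [ha]
  have hsum_parts : ∑ i ∈ Finset.range 3, a i = n := by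
    rw [ha]
    have := Finset.card_eq_sum_card_fiberwise
      (f := fun v : Fin n => (v : ℕ) % 3) (s := Finset.univ) (t := Finset.range 3)
      (fun v _ => Finset.mem_range.2 (Nat.mod_lt _ (by norm_num)))
    simpa using this.symm
  have hfiber : ∑ v : Fin n, (a ((v : ℕ) % 3) : ℝ) =
      ∑ i ∈ Finset.range 3, (a i : ℝ) * (a i : ℝ) := by
    rw [← Finset.sum_fiberwise_of_maps_to (g := fun v : Fin n => (v : ℕ) % 3)
      (t := Finset.range 3) (f := fun v : Fin n => (a ((v : ℕ) % 3) : ℝ))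
      (fun v _ => Finset.mem_range.2 (Nat.mod_lt _ (by norm_num)))]
    refine Finset.sum_congr rfl fun i _ => ?_
    rw [Finset.sum_congr rfl (fun v hv => by
      rw [(Finset.mem_filter.1 hv).2]), Finset.sum_const, nsmul_eq_mul]
  have hcast : (∑ v : Fin n, (T.degree v : ℝ)) =
      (n : ℝ) * n - ∑ i ∈ Finset.range 3, (a i : ℝ) * (a i : ℝ) := by
    rw [← hfiber]
    have : ∀ v : Fin n, (T.degree v : ℝ) = (n : ℝ) - (a ((v : ℕ) % 3) : ℝ) := by
      intro v
      rw [hdegv v, Nat.cast_sub (haN _)]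
    rw [Finset.sum_congr rfl (fun v _ => this v), Finset.sum_sub_distrib]
    simp [mul_comm]
  have h2E : (2 : ℝ) * T.edgeFinset.card =
      (n : ℝ) * n - ∑ i ∈ Finset.range 3, (a i : ℝ) * (a i : ℝ) := by
    have hc := congrArg (fun k : ℕ => (k : ℝ)) hdeg
    push_cast at hc
    rw [← hcast, ← hc]
  -- Cauchy–Schwarz for three terms
  have hsum3 : ∑ i ∈ Finset.range 3, (a i : ℝ) = (n : ℝ) := by
    rw [← hsum_parts]; push_cast; ring
  have hexp : (a 0 : ℝ) + a 1 + a 2 = n := by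
    rw [← hsum3, Finset.sum_range_succ, Finset.sum_range_succ, Finset.sum_range_one]
  have hsq : ((n : ℝ)) ^ 2 / 3 ≤ ∑ i ∈ Finset.range 3, (a i : ℝ) * (a i : ℝ) := by
    rw [Finset.sum_range_succ, Finset.sum_range_succ, Finset.sum_range_one]
    nlinarith [sq_nonneg ((a 0 : ℝ) - a 1), sq_nonneg ((a 0 : ℝ) - a 2),
      sq_nonneg ((a 1 : ℝ) - a 2), hexp]
  nlinarith [h2E, hsq]

/-- Turán's theorem for `K₄`: every `K₄`-free simple graph on `n` vertices has at
most `n²/3` edges. -/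
theorem stmt_8 {V : Type*} [Fintype V] [DecidableEq V]
    (G : SimpleGraph V) [DecidableRel G.Adj]
    (n : ℕ) (hn : Fintype.card V = n)
    (hfree : G.CliqueFree 4) :
    (G.edgeFinset.card : ℝ) ≤ (n : ℝ) ^ 2 / 3 := by
  obtain ⟨H, hd, hH⟩ := SimpleGraph.exists_isTuranMaximal (V := V) (r := 3) (by norm_num)
  have h1 : G.edgeFinset.card ≤ H.edgeFinset.card := hH.2 hfree
  obtain ⟨f⟩ := hH.nonempty_iso_turanGraph
  have h2 : H.edgeFinset.card = (SimpleGraph.turanGraph (Fintype.card V) 3).edgeFinset.card :=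
    f.card_edgeFinset_eq
  have := turan3_bound n
  rw [hn] at h2
  calc (G.edgeFinset.card : ℝ) ≤ H.edgeFinset.card := by exact_mod_cast h1
    _ = ((SimpleGraph.turanGraph n 3).edgeFinset.card : ℝ) := by exact_mod_cast h2
    _ ≤ (n : ℝ) ^ 2 / 3 := this
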